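/- Let b ≥ 2, let D be a finite set of nonnegative integers, and let N be a blocking of the Φ-tree of b such that the kernel polynomial ∏_{d ∈ N} Φ_d(X) divides P_D(X) in ℤ[X]. Then D satisfies the Kenyon condition with respect to b: for every integer m ≥ 1 there exists an integer k ≥ 1 such that P_D(e^{2πi m/b^k}) = 0. -/

import Mathlib

open Polynomial

/-- The mask polynomial `P_A(X) = ∑_{a ∈ A} X^a ∈ ℤ[X]` of a finite set of naturals. -/
noncomputable def mask (A : Finset ℕ) : Polynomial ℤ := ∑ a ∈ A, X ^ a

/-- The Kenyon condition with respect to `b`. -/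
def Kenyon (b : ℕ) (D : Finset ℕ) : Prop :=
  ∀ m : ℕ, 1 ≤ m → ∃ k : ℕ, 1 ≤ k ∧
    Polynomial.aeval (Complex.exp (2 * Real.pi * Complex.I * (m : ℂ) / (b : ℂ) ^ k)) (mask D) = 0

/-- An infinite path in the Φ-tree of `b` (indices `k ≥ 1`). -/
def IsPhiPath (b : ℕ) (d : ℕ → ℕ) : Prop :=
  1 < d 1 ∧ d 1 ∣ b ∧ ∀ k : ℕ, 1 ≤ k → 1 < d (k + 1) ∧
    cyclotomic (d (k + 1)) ℤ ∣ (cyclotomic (d k) ℤ).comp (X ^ b)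

/-- A blocking of the Φ-tree of `b`. -/
def IsPhiBlocking (b : ℕ) (N : Finset ℕ) : Prop :=
  (∀ e ∈ N, 1 < e ∧ ∃ d : ℕ → ℕ, IsPhiPath b d ∧ ∃ k : ℕ, 1 ≤ k ∧ d k = e) ∧
    ∀ d : ℕ → ℕ, IsPhiPath b d → ∃! k : ℕ, 1 ≤ k ∧ d k ∈ N

private lemma prim_exp (b m k : ℕ) (hb : 0 < b) :
    IsPrimitiveRoot (Complex.exp (2 * Real.pi * Complex.I * (m : ℂ) / (b : ℂ) ^ k))
      (b ^ k / Nat.gcd m (b ^ k)) := by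
  have hbk : 0 < b ^ k := pow_pos hb k
  have hg : 0 < Nat.gcd m (b ^ k) := Nat.gcd_pos_of_pos_right m hbk
  have hcop : Nat.Coprime (m / Nat.gcd m (b ^ k)) (b ^ k / Nat.gcd m (b ^ k)) :=
    Nat.coprime_div_gcd_div_gcd hg
  have hnpos : 0 < b ^ k / Nat.gcd m (b ^ k) :=
    Nat.div_pos (Nat.le_of_dvd hbk (Nat.gcd_dvd_right _ _)) hg
  have H := Complex.isPrimitiveRoot_exp_of_coprime _ _ hnpos.ne' hcop
  have hgC : (Nat.gcd m (b ^ k) : ℂ) ≠ 0 := Nat.cast_ne_zero.mpr hg.ne'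
  have hbkC : ((b : ℂ)) ^ k ≠ 0 := by
    exact_mod_cast (Nat.cast_ne_zero (R := ℂ)).mpr hbk.ne'
  have hm' : ((m / Nat.gcd m (b ^ k) : ℕ) : ℂ) = (m : ℂ) / (Nat.gcd m (b ^ k) : ℂ) := by
    rw [eq_div_iff hgC]
    exact_mod_cast congrArg (Nat.cast : ℕ → ℂ) (Nat.div_mul_cancel (Nat.gcd_dvd_left m (b ^ k)))
  have hn' : ((b ^ k / Nat.gcd m (b ^ k) : ℕ) : ℂ) = (b : ℂ) ^ k / (Nat.gcd m (b ^ k) : ℂ) := by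
    rw [eq_div_iff hgC]
    have := congrArg (Nat.cast : ℕ → ℂ) (Nat.div_mul_cancel (Nat.gcd_dvd_right m (b ^ k)))
    push_cast at this ⊢
    exact this
  have harg : 2 * (Real.pi : ℂ) * Complex.I *
      (((m / Nat.gcd m (b ^ k) : ℕ) : ℂ) / ((b ^ k / Nat.gcd m (b ^ k) : ℕ) : ℂ)) =
      2 * (Real.pi : ℂ) * Complex.I * (m : ℂ) / (b : ℂ) ^ k := by
    rw [hm', hn']
    field_simp
  rwa [harg] at H

private lemma pow_div_gcd_pos (b m k : ℕ) (hb : 0 < b) :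
    0 < b ^ k / Nat.gcd m (b ^ k) := by
  have hbk : 0 < b ^ k := pow_pos hb k
  exact Nat.div_pos (Nat.le_of_dvd hbk (Nat.gcd_dvd_right _ _))
    (Nat.gcd_pos_of_pos_right m hbk)

private lemma cyclo_dvd (b m k : ℕ) (hb : 0 < b) :
    cyclotomic (b ^ (k + 1) / Nat.gcd m (b ^ (k + 1))) ℤ ∣
      (cyclotomic (b ^ k / Nat.gcd m (b ^ k)) ℤ).comp (X ^ b) := by
  set n := b ^ (k + 1) / Nat.gcd m (b ^ (k + 1)) with hn
  set m' := b ^ k / Nat.gcd m (b ^ k) with hm'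
  set ξ : ℂ := Complex.exp (2 * Real.pi * Complex.I * (m : ℂ) / (b : ℂ) ^ (k + 1)) with hξ
  have h1 : IsPrimitiveRoot ξ n := prim_exp b m (k + 1) hb
  have hbC : (b : ℂ) ≠ 0 := Nat.cast_ne_zero.mpr hb.ne'
  have h2 : ξ ^ b = Complex.exp (2 * Real.pi * Complex.I * (m : ℂ) / (b : ℂ) ^ k) := by
    rw [hξ, ← Complex.exp_nat_mul]
    congr 1
    rw [pow_succ]
    field_simp
  have h2prim : IsPrimitiveRoot (ξ ^ b) m' := by
    rw [h2]; exact prim_exp b m k hb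
  have hnpos : 0 < n := pow_div_gcd_pos b m (k + 1) hb
  have hmpos : 0 < m' := pow_div_gcd_pos b m k hb
  have hQ : cyclotomic n ℚ ∣ (cyclotomic m' ℚ).comp (X ^ b) := by
    rw [cyclotomic_eq_minpoly_rat h1 hnpos]
    apply minpoly.dvd
    rw [aeval_comp]
    have hx : aeval ξ ((X : ℚ[X]) ^ b) = ξ ^ b := by simp
    rw [hx, aeval_def, eval₂_eq_eval_map, map_cyclotomic]
    exact h2prim.isRoot_cyclotomic hmpos
  rw [← map_dvd_map (Int.castRingHom ℚ) Int.cast_injective (cyclotomic.monic n ℤ),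
    map_cyclotomic, Polynomial.map_comp, map_cyclotomic, Polynomial.map_pow, Polynomial.map_X]
  exact hQ

/-- If the kernel polynomial of a blocking of the Φ-tree divides `P_D(X)`, then `D`
satisfies the Kenyon condition. -/
theorem stmt17 (b : ℕ) (hb : 2 ≤ b) (D : Finset ℕ) (N : Finset ℕ)
    (hN : IsPhiBlocking b N) (hdvd : (∏ d ∈ N, cyclotomic d ℤ) ∣ mask D) :
    Kenyon b D := by
  intro m hm
  have hb0 : 0 < b := by omega
  have hb1 : 1 < b := hb
  -- the largest `t` with `b ^ t ∣ m`
  set t := Nat.findGreatest (fun k => b ^ k ∣ m) m with ht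
  have hbt : b ^ t ∣ m :=
    Nat.findGreatest_spec (P := fun k => b ^ k ∣ m) (Nat.zero_le m) (by simp)
  have hgt : ∀ k, t < k → ¬ b ^ k ∣ m := by
    intro k hk hdvdk
    have hbkm : b ^ k ≤ m := Nat.le_of_dvd hm hdvdk
    have hkbk : k < b ^ k := Nat.lt_pow_self hb1
    have hkm : k ≤ m := le_of_lt (lt_of_lt_of_le hkbk hbkm)
    exact Nat.findGreatest_is_greatest hk hkm hdvdk
  -- for `k > t`, `b ^ k / gcd m (b ^ k) > 1`
  have h1lt : ∀ k, t < k → 1 < b ^ k / Nat.gcd m (b ^ k) := by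
    intro k hk
    by_contra hcon
    push_neg at hcon
    have hpos := pow_div_gcd_pos b m k hb0
    have heq : b ^ k / Nat.gcd m (b ^ k) = 1 := le_antisymm hcon hpos
    have hmc : b ^ k / Nat.gcd m (b ^ k) * Nat.gcd m (b ^ k) = b ^ k :=
      Nat.div_mul_cancel (Nat.gcd_dvd_right m (b ^ k))
    rw [heq, one_mul] at hmc
    exact hgt k hk (hmc ▸ Nat.gcd_dvd_left m (b ^ k))
  -- the path
  set e : ℕ → ℕ := fun k => b ^ (k + t) / Nat.gcd m (b ^ (k + t)) with he
  have hpath : IsPhiPath b e := by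
    refine ⟨h1lt (1 + t) (by omega), ?_, ?_⟩
    · -- e 1 ∣ b
      show b ^ (1 + t) / Nat.gcd m (b ^ (1 + t)) ∣ b
      have hbtg : b ^ t ∣ Nat.gcd m (b ^ (1 + t)) :=
        Nat.dvd_gcd hbt (pow_dvd_pow b (by omega))
      obtain ⟨h, hh⟩ := hbtg
      have key : b ^ (1 + t) / Nat.gcd m (b ^ (1 + t)) * (b ^ t * h) = b ^ t * b := by
        rw [← hh, Nat.div_mul_cancel (Nat.gcd_dvd_right _ _)]
        rw [add_comm, pow_succ]
      have key2 : b ^ t * (b ^ (1 + t) / Nat.gcd m (b ^ (1 + t)) * h) = b ^ t * b := by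
        rw [← key]; ring
      have := Nat.eq_of_mul_eq_mul_left (pow_pos hb0 t) key2
      exact Dvd.intro h this
    · intro k hk
      constructor
      · exact h1lt (k + 1 + t) (by omega)
      · have := cyclo_dvd b m (k + t) hb0
        have harr : k + 1 + t = k + t + 1 := by omega
        rw [he]
        simp only [harr]
        exact this
  -- use the blocking
  obtain ⟨kk, ⟨hk1, hkN⟩, _⟩ := hN.2 e hpath
  refine ⟨kk + t, by omega, ?_⟩
  set ξ : ℂ := Complex.exp (2 * Real.pi * Complex.I * (m : ℂ) / (b : ℂ) ^ (kk + t)) with hξ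
  have hprim : IsPrimitiveRoot ξ (e kk) := prim_exp b m (kk + t) hb0
  have hcydvd : cyclotomic (e kk) ℤ ∣ mask D :=
    dvd_trans (Finset.dvd_prod_of_mem (fun d => cyclotomic d ℤ) hkN) hdvd
  obtain ⟨q, hq⟩ := hcydvd
  have hzero : aeval ξ (cyclotomic (e kk) ℤ) = 0 := by
    rw [aeval_def, eval₂_eq_eval_map, map_cyclotomic]
    exact hprim.isRoot_cyclotomic (pow_div_gcd_pos b m (kk + t) hb0)
  rw [hq, map_mul, hzero, zero_mul]
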